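/- Let f : Σ^ℤ → Σ^ℤ be a cellular automaton whose minimal (connected) neighborhood has size r > 1. Then there exist words u, v of length r−1 and symbols a, c ∈ Σ, with the local rule giving f(uav) and f(ucv) differing in at least two coordinates; consequently, taking x = ∞(uav)∞ and y = ∞(ucv)∞, one has d_B(x,y) = 1/(2r−1) but d_B(f(x), f(y)) ≥ 2/(2r−1). Hence any cellular automaton on the full shift that is contracting with respect to d_B (i.e., d_B(f(x),f(y)) ≤ d_B(x,y) for all x,y) has a neighborhood of size 1. -/

import Mathlib

open Filter

/-- Hamming distance between `x` and `y` on the coordinate interval `[a, b]`. -/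
noncomputable def hamIcc {A : Type*} (x y : ℤ → A) (a b : ℤ) : ℕ :=
  @Finset.card ℤ (@Finset.filter ℤ (fun i => x i ≠ y i) (Classical.decPred _) (Finset.Icc a b))

/-- The Besicovitch pseudodistance on `A^ℤ`. -/
noncomputable def dB {A : Type*} (x y : ℤ → A) : ℝ :=
  atTop.limsup fun n : ℕ => (hamIcc x y (-(n : ℤ)) n : ℝ) / (2 * n + 1)

/-- The Weyl pseudodistance on `A^ℤ`. -/
noncomputable def dW {A : Type*} (x y : ℤ → A) : ℝ :=
  atTop.limsup fun n : ℕ => ⨆ m : ℤ, (hamIcc x y (m - n) (m + n) : ℝ) / (2 * n + 1)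

/-- The shift map. -/
def shiftMap {A : Type*} (x : ℤ → A) : ℤ → A := fun i => x (i + 1)

/-- A subshift: a shift-invariant subset of `A^ℤ` closed in the Cantor topology. -/
def IsSubshift {A : Type*} (X : Set (ℤ → A)) : Prop :=
  (∀ x ∈ X, shiftMap x ∈ X) ∧ (∀ x ∈ X, (fun i => x (i - 1)) ∈ X) ∧
  (∀ x : ℤ → A, (∀ n : ℕ, ∃ y ∈ X, ∀ i : ℤ, |i| ≤ (n : ℤ) → y i = x i) → x ∈ X)

/-- The word `w` occurs in (some point of) `X`. -/
def occursIn {A : Type*} (X : Set (ℤ → A)) {k : ℕ} (w : Fin k → A) : Prop :=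
  ∃ x ∈ X, ∃ i : ℤ, ∀ j : Fin k, x (i + j) = w j

/-- A shift of finite type: defined by a clopen window condition. -/
def IsSFT {A : Type*} (X : Set (ℤ → A)) : Prop :=
  ∃ (k : ℕ) (P : (Fin k → A) → Prop), X = {x | ∀ i : ℤ, P (fun j => x (i + j))}

/-- A sliding block code (cellular automaton when `A = B`) of some radius `r`. -/
def IsSlidingBlock {A B : Type*} (φ : (ℤ → A) → (ℤ → B)) : Prop :=
  ∃ (r : ℕ) (f : (Fin (2 * r + 1) → A) → B), ∀ x i, φ x i = f fun j => x (i - r + j)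

/-- A sofic shift: the image of an SFT under a sliding block code. -/
def IsSofic {A : Type*} (X : Set (ℤ → A)) : Prop :=
  ∃ (B : Type) (_ : Fintype B) (Y : Set (ℤ → B)) (φ : (ℤ → B) → (ℤ → A)),
    IsSFT Y ∧ IsSlidingBlock φ ∧ X = φ '' Y

/-- Topological mixing for shift spaces, in terms of words of the language. -/
def IsMixingShift {A : Type*} (X : Set (ℤ → A)) : Prop :=
  ∀ (k l : ℕ) (u : Fin k → A) (v : Fin l → A), occursIn X u → occursIn X v →
    ∃ N : ℕ, ∀ n ≥ N, ∃ x ∈ X, ∃ i : ℤ,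
      (∀ j : Fin k, x (i + j) = u j) ∧ (∀ j : Fin l, x (i + k + n + j) = v j)

/-- Topological entropy of a shift space. -/
noncomputable def shiftEntropy {A : Type*} (X : Set (ℤ → A)) : ℝ :=
  atTop.limsup fun n : ℕ => Real.log (Set.ncard {w : Fin n → A | occursIn X w}) / n

/-- The periodic configuration `∞w∞` with period word `w`. -/
def perPt {A : Type*} {n : ℕ} (hn : 0 < n) (w : Fin n → A) : ℤ → A := fun i =>
  w ⟨(i % (n : ℤ)).toNat, by
    have h1 : (0 : ℤ) < (n : ℤ) := by exact_mod_cast hn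
    have h2 := Int.emod_nonneg i (by omega : (n : ℤ) ≠ 0)
    have h3 := Int.emod_lt_of_pos i h1
    omega⟩

/-- The density coding `U' : [0,1] → {0,1}^ℕ`: the dyadic interval of `ℕ` containing `n`
has left endpoint `2^(Nat.log 2 (n+1)) - 1` and length `L = 2^(Nat.log 2 (n+1))`; it is
filled with `⌊x·L⌋` zeros (`false`) followed by ones (`true`). -/
noncomputable def Uprime (x : ℝ) (n : ℕ) : Bool :=
  decide (⌊x * 2 ^ Nat.log 2 (n + 1)⌋ ≤ ((n : ℤ) + 1 - 2 ^ Nat.log 2 (n + 1)))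

/-- The two-sided version `T'(x) = U'(x)^R.U'(x)`. -/
noncomputable def Tprime (x : ℝ) : ℤ → Bool := fun i =>
  if 0 ≤ i then Uprime x i.toNat else Uprime x (-i - 1).toNat

/-- The one-sided Besicovitch pseudodistance. -/
noncomputable def dB1 {A : Type*} (u v : ℕ → A) : ℝ :=
  atTop.limsup fun n : ℕ =>
    ((@Finset.filter ℕ (fun i => u i ≠ v i) (Classical.decPred _) (Finset.range n)).card : ℝ) / n

/-- `F` has the size-`r` neighborhood `[a, a+r)`. -/
def HasNbhd {A : Type*} (F : (ℤ → A) → (ℤ → A)) (a : ℤ) (r : ℕ) : Prop :=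
  ∃ f : (Fin r → A) → A, ∀ x i, F x i = f fun j => x (i + a + j)


lemma count_card (n k : ℤ) (hn : 0 < n) (hk0 : 0 ≤ k) (hkn : k < n) (N : ℕ) :
    2*(N:ℤ) + 1 - n ≤ n * (((Finset.Icc (-(N:ℤ)) N).filter (fun i => i % n = k)).card : ℤ) ∧
    n * (((Finset.Icc (-(N:ℤ)) N).filter (fun i => i % n = k)).card : ℤ) ≤ 2*(N:ℤ) + n := by
  classical
  have himg : (Finset.Icc (-(N:ℤ)) N).filter (fun i => i % n = k)
      = (Finset.Icc (-(((N:ℤ) + k) / n)) (((N:ℤ) - k) / n)).image (fun q => n*q + k) := by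
    ext i
    simp only [Finset.mem_filter, Finset.mem_Icc, Finset.mem_image]
    constructor
    · rintro ⟨⟨h1, h2⟩, h3⟩
      have hd := Int.mul_ediv_add_emod i n
      refine ⟨i / n, ⟨?_, ?_⟩, by omega⟩
      · have : -(i/n) ≤ ((N:ℤ) + k) / n := by
          rw [Int.le_ediv_iff_mul_le hn]
          have : -(i/n) * n = -(n * (i/n)) := by ring
          omega
        omega
      · rw [Int.le_ediv_iff_mul_le hn]
        have : (i/n) * n = n * (i/n) := by ring
        omega
    · rintro ⟨q, ⟨hq1', hq2'⟩, rfl⟩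
      have e1 : q * n ≤ (N:ℤ) - k := by rw [← Int.le_ediv_iff_mul_le hn]; exact hq2'
      have e2 : (-q) * n ≤ (N:ℤ) + k := by rw [← Int.le_ediv_iff_mul_le hn]; omega
      have e1' : q * n = n * q := by ring
      have e2' : (-q) * n = -(n*q) := by ring
      refine ⟨⟨by omega, by omega⟩, ?_⟩
      have : (n*q + k) % n = k % n := by
        conv_lhs => rw [add_comm, Int.add_mul_emod_self_left]
      rw [this, Int.emod_eq_of_lt hk0 hkn]
  have hinj : Function.Injective (fun q : ℤ => n*q + k) := by
    intro a b h
    simp only at h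
    have : n * a = n * b := by omega
    exact mul_left_cancel₀ (by omega) this
  have hcard : (((Finset.Icc (-(N:ℤ)) N).filter (fun i => i % n = k)).card : ℤ)
      = (((N:ℤ) - k) / n + 1 + ((N:ℤ) + k) / n).toNat := by
    rw [himg, Finset.card_image_of_injective _ hinj, Int.card_Icc]
    congr 1
    ring
  have hr1 := Int.mul_ediv_add_emod ((N:ℤ) - k) n
  have hm1 := Int.emod_nonneg ((N:ℤ) - k) (by omega : n ≠ 0)
  have hm1' := Int.emod_lt_of_pos ((N:ℤ) - k) hn
  have hr2 := Int.mul_ediv_add_emod ((N:ℤ) + k) n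
  have hm2 := Int.emod_nonneg ((N:ℤ) + k) (by omega : n ≠ 0)
  have hm2' := Int.emod_lt_of_pos ((N:ℤ) + k) hn
  have hq2nn : 0 ≤ ((N:ℤ) + k) / n := Int.ediv_nonneg (by omega) (by omega)
  have hq1lb : -1 ≤ ((N:ℤ) - k) / n := by
    by_contra h
    push_neg at h
    have h2 : n * (((N:ℤ) - k) / n) ≤ n * (-2) := mul_le_mul_of_nonneg_left (by omega) (by omega)
    omega
  have hnn : 0 ≤ ((N:ℤ) - k) / n + 1 + ((N:ℤ) + k) / n := by omega
  rw [hcard, Int.toNat_of_nonneg hnn]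
  constructor
  · nlinarith
  · nlinarith

lemma inv_two_n_tendsto : Tendsto (fun N : ℕ => 1/(2*(N:ℝ)+1)) atTop (nhds 0) := by
  apply Tendsto.div_atTop tendsto_const_nhds
  apply Filter.tendsto_atTop_add_const_right
  exact (tendsto_natCast_atTop_atTop).const_mul_atTop (by norm_num)

lemma ratio_tendsto (n : ℕ) (hn : 0 < n) (c : ℕ → ℕ)
    (hlo : ∀ N : ℕ, 2*(N:ℤ) + 1 - n ≤ n * c N) (hhi : ∀ N : ℕ, (n:ℤ) * c N ≤ 2*(N:ℤ) + n) :
    Tendsto (fun N : ℕ => (c N : ℝ)/(2*(N:ℝ)+1)) atTop (nhds (1/(n:ℝ))) := by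
  have hnR : (0:ℝ) < n := by exact_mod_cast hn
  have key : ∀ N : ℕ, 1/(n:ℝ) - 1/(2*(N:ℝ)+1) ≤ (c N : ℝ)/(2*(N:ℝ)+1)
      ∧ (c N : ℝ)/(2*(N:ℝ)+1) ≤ 1/(n:ℝ) + 1/(2*(N:ℝ)+1) := by
    intro N
    have hD : (0:ℝ) < 2*(N:ℝ)+1 := by positivity
    have h1 : (2*(N:ℝ) + 1 - n) ≤ n * c N := by exact_mod_cast hlo N
    have h2 : (n:ℝ) * c N ≤ 2*(N:ℝ) + n := by exact_mod_cast hhi N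
    have e1 : 1/(n:ℝ) - 1/(2*(N:ℝ)+1) = (2*(N:ℝ)+1-n)/((n:ℝ)*(2*(N:ℝ)+1)) := by
      field_simp
    have e2 : 1/(n:ℝ) + 1/(2*(N:ℝ)+1) = (2*(N:ℝ)+1+n)/((n:ℝ)*(2*(N:ℝ)+1)) := by
      field_simp
    constructor
    · rw [e1, div_le_div_iff₀ (by positivity) hD]
      nlinarith
    · rw [e2, div_le_div_iff₀ hD (by positivity)]
      nlinarith
  have h0 : Tendsto (fun N : ℕ => 1/(n:ℝ) - 1/(2*(N:ℝ)+1)) atTop (nhds (1/(n:ℝ))) := by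
    simpa using (tendsto_const_nhds.sub inv_two_n_tendsto)
  have h1 : Tendsto (fun N : ℕ => 1/(n:ℝ) + 1/(2*(N:ℝ)+1)) atTop (nhds (1/(n:ℝ))) := by
    simpa using (tendsto_const_nhds.add inv_two_n_tendsto)
  exact tendsto_of_tendsto_of_tendsto_of_le_of_le h0 h1 (fun N => (key N).1) (fun N => (key N).2)

lemma le_limsup_aux (c : ℝ) (f g : ℕ → ℝ) (hb : ∀ N, f N ≤ 1)
    (hg : Tendsto g atTop (nhds c)) (hgf : ∀ N, g N ≤ f N) :
    c ≤ atTop.limsup f := by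
  have h1 : atTop.limsup g = c := hg.limsup_eq
  rw [← h1]
  exact Filter.limsup_le_limsup (Filter.Eventually.of_forall hgf)
    (hg.isCoboundedUnder_le) (Filter.isBoundedUnder_of ⟨1, hb⟩)
lemma exists_both {A : Type*} (RL RR : A → A → Prop)
    (hLt : ∀ x y z, RL x y → RL y z → RL x z) (hLs : ∀ x y, RL x y → RL y x)
    (hRt : ∀ x y z, RR x y → RR y z → RR x z) (hRs : ∀ x y, RR x y → RR y x)
    (h1 : ∃ b c, ¬ RL b c) (h2 : ∃ d e, ¬ RR d e) :
    ∃ b c, ¬ RL b c ∧ ¬ RR b c := by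
  obtain ⟨b, c, hbc⟩ := h1
  obtain ⟨d, e, hde⟩ := h2
  by_cases h3 : RR b c
  · by_cases h4 : RL d e
    · by_cases h5 : RL d b
      · -- RL d b, so ¬ RL d c (else RL b c)
        have hdc : ¬ RL c d := fun h => hbc (hLt _ _ _ (hLs _ _ h5) (hLs _ _ h))
        by_cases h6 : RR c d
        · refine ⟨c, e, ?_, ?_⟩
          · intro h
            have hbd : RL b d := hLs _ _ h5
            have hbe : RL b e := hLt _ _ _ hbd h4
            exact hbc (hLt _ _ _ hbe (hLs _ _ h))
          · intro h
            exact hde (hRt _ _ _ (hRs _ _ h6) h)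
        · exact ⟨c, d, hdc, h6⟩
      · by_cases h6 : RR b d
        · refine ⟨b, e, ?_, ?_⟩
          · intro h
            exact h5 (hLt _ _ _ h4 (hLs _ _ h))
          · intro h
            exact hde (hRt _ _ _ (hRs _ _ h6) h)
        · exact ⟨b, d, fun h => h5 (hLs _ _ h), h6⟩
    · exact ⟨d, e, h4, hde⟩
  · exact ⟨b, c, hbc, h3⟩

lemma hasNbhd_left {A : Type*} [Nonempty A] (F : (ℤ → A) → (ℤ → A)) (a : ℤ) (r : ℕ) (hr : 0 < r)
    (f : (Fin r → A) → A) (hf : ∀ x i, F x i = f fun j => x (i + a + j))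
    (h : ∀ b c v, f (Function.update v ⟨0, hr⟩ b) = f (Function.update v ⟨0, hr⟩ c)) :
    HasNbhd F (a+1) (r-1) := by
  set d := Classical.arbitrary A
  refine ⟨fun u => f (fun j => if h0 : (j : ℕ) = 0 then d else u ⟨(j:ℕ)-1, by omega⟩), ?_⟩
  intro x i
  rw [hf x i]
  beta_reduce
  have : (fun (j : Fin r) => if h0 : (j:ℕ) = 0 then d
        else (fun j : Fin (r-1) => x (i + (a+1) + j)) ⟨(j:ℕ)-1, by omega⟩)
      = Function.update (fun j : Fin r => x (i + a + j)) ⟨0, hr⟩ d := by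
    funext j
    by_cases h0 : (j : ℕ) = 0
    · have hj : j = ⟨0, hr⟩ := Fin.ext h0
      rw [hj]
      simp
    · have hj : j ≠ ⟨0, hr⟩ := fun hh => h0 (by rw [hh])
      rw [Function.update_of_ne hj]
      simp only [dif_neg h0]
      congr 1
      have : (((j:ℕ) - 1 : ℕ) : ℤ) = (j:ℤ) - 1 := by
        have := j.isLt
        omega
      rw [this]
      ring
  rw [this]
  have h2 := h ((fun j : Fin r => x (i + a + j)) ⟨0, hr⟩) d (fun j : Fin r => x (i + a + j))
  rw [Function.update_eq_self] at h2
  exact h2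

lemma hasNbhd_right {A : Type*} [Nonempty A] (F : (ℤ → A) → (ℤ → A)) (a : ℤ) (r : ℕ) (hr : 0 < r)
    (f : (Fin r → A) → A) (hf : ∀ x i, F x i = f fun j => x (i + a + j))
    (h : ∀ b c v, f (Function.update v ⟨r-1, by omega⟩ b) = f (Function.update v ⟨r-1, by omega⟩ c)) :
    HasNbhd F a (r-1) := by
  set d := Classical.arbitrary A
  refine ⟨fun u => f (fun j => if h0 : (j : ℕ) = r-1 then d else u ⟨(j:ℕ), by omega⟩), ?_⟩
  intro x i
  rw [hf x i]
  beta_reduce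
  have : (fun (j : Fin r) => if h0 : (j:ℕ) = r-1 then d
        else (fun j : Fin (r-1) => x (i + a + j)) ⟨(j:ℕ), by omega⟩)
      = Function.update (fun j : Fin r => x (i + a + j)) ⟨r-1, by omega⟩ d := by
    funext j
    by_cases h0 : (j : ℕ) = r-1
    · have hj : j = ⟨r-1, by omega⟩ := Fin.ext h0
      rw [hj]
      simp
    · have hj : j ≠ ⟨r-1, by omega⟩ := fun hh => h0 (by rw [hh])
      rw [Function.update_of_ne hj]
      simp only [dif_neg h0]
  rw [this]
  have h2 := h ((fun j : Fin r => x (i + a + j)) ⟨r-1, by omega⟩) d (fun j : Fin r => x (i + a + j))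
  rw [Function.update_eq_self] at h2
  exact h2

def mkWord {A : Type*} (r : ℕ) (hr : 1 < r) (u v : Fin r → A) (b : A) : Fin (2*r-1) → A :=
  fun j =>
    if h1 : (j:ℕ) < r - 1 then u ⟨(j:ℕ), by omega⟩
    else if h2 : (j:ℕ) = r - 1 then b
    else v ⟨(j:ℕ) - (r-1), by omega⟩

lemma perPt_window {A : Type*} (r : ℕ) (hr : 1 < r) (w : Fin (2*r-1) → A) (i : ℤ) (m : ℕ)
    (hm : m ≤ r - 1) (hi : i % ((2*r-1 : ℕ) : ℤ) = (m : ℤ)) (j : Fin r) :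
    perPt (show 0 < 2*r-1 by omega) w (i + j) = w ⟨m + (j:ℕ), by have := j.isLt; omega⟩ := by
  show w _ = w _
  congr 1
  apply Fin.ext
  show ((i + (j:ℤ)) % ((2*r-1:ℕ):ℤ)).toNat = m + (j:ℕ)
  have hjr := j.isLt
  have hnz : (0:ℤ) < ((2*r-1:ℕ):ℤ) := by push_cast; omega
  have hmm : (m:ℤ) % ((2*r-1:ℕ):ℤ) = (m:ℤ) :=
    Int.emod_eq_of_lt (by positivity) (by push_cast; omega)
  have h1 : (i + (j:ℤ)) % ((2*r-1:ℕ):ℤ) = ((m:ℤ) + (j:ℤ)) % ((2*r-1:ℕ):ℤ) := by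
    rw [Int.add_emod i, Int.add_emod (m:ℤ), hi, hmm]
  have h2 : ((m:ℤ) + (j:ℤ)) % ((2*r-1:ℕ):ℤ) = (m:ℤ) + (j:ℤ) :=
    Int.emod_eq_of_lt (by positivity) (by push_cast; omega)
  omega

lemma mkWord_at_left {A : Type*} (r : ℕ) (hr : 1 < r) (u v : Fin r → A) (b : A)
    (hL : r - 1 < r) (j : Fin r) (hj : (j:ℕ) < 2*r-1) :
    mkWord r hr u v b ⟨(j:ℕ), hj⟩ = Function.update u ⟨r-1, hL⟩ b j := by
  have hjr := j.isLt
  rcases eq_or_ne j ⟨r-1, hL⟩ with h | h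
  · subst h
    rw [Function.update_self]
    simp only [mkWord, Fin.val_mk]
    split_ifs
    all_goals first | rfl | (exfalso; omega)
  · have hne : (j:ℕ) ≠ r-1 := fun hh => h (Fin.ext hh)
    rw [Function.update_of_ne h]
    simp only [mkWord, Fin.val_mk]
    split_ifs
    all_goals first | exact congrArg u (Fin.eta _ _) | (exfalso; omega)
lemma mkWord_at_right {A : Type*} (r : ℕ) (hr : 1 < r) (u v : Fin r → A) (b : A)
    (h0 : 0 < r) (j : Fin r) (hj : r-1+(j:ℕ) < 2*r-1) :
    mkWord r hr u v b ⟨r-1+(j:ℕ), hj⟩ = Function.update v ⟨0, h0⟩ b j := by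
  have hjr := j.isLt
  rcases eq_or_ne j ⟨0, h0⟩ with h | h
  · subst h
    rw [Function.update_self]
    simp only [mkWord, Fin.val_mk]
    split_ifs
    all_goals first | rfl | (exfalso; omega)
  · have hne : (j:ℕ) ≠ 0 := fun hh => h (Fin.ext hh)
    rw [Function.update_of_ne h]
    simp only [mkWord, Fin.val_mk]
    split_ifs with h1 h2
    · exfalso; omega
    · exfalso; omega
    · exact congrArg v (Fin.ext (show r-1+(j:ℕ)-(r-1) = (j:ℕ) by omega))

lemma two_div_sub (R D : ℝ) (hR : R ≠ 0) (hD : D ≠ 0) :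
    2/R - 2/D = (2*D - 2*R)/(R*D) := by
  field_simp

/-- if the minimal neighborhood of a CA has size `r > 1`, then there
are two periodic points `∞w∞`, `∞w'∞` of period `2r-1`, with `w, w'` differing in
exactly one coordinate, with `d_B = 1/(2r-1)` but images at distance `≥ 2/(2r-1)`;
hence a `dB`-contracting CA on the full shift has a neighborhood of size 1. -/
theorem contracting_ca_radius_one {A : Type*} [Fintype A]
    (F : (ℤ → A) → (ℤ → A)) (r : ℕ) (hr : 1 < r)
    (hnbhd : ∃ a : ℤ, HasNbhd F a r)
    (hmin : ∀ (a : ℤ) (r' : ℕ), r' < r → ¬ HasNbhd F a r') :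
    (∃ w w' : Fin (2 * r - 1) → A,
      (∃! j : Fin (2 * r - 1), w j ≠ w' j) ∧
      dB (perPt (n := 2 * r - 1) (by omega) w) (perPt (n := 2 * r - 1) (by omega) w')
        = 1 / (2 * (r : ℝ) - 1) ∧
      2 / (2 * (r : ℝ) - 1) ≤
        dB (F (perPt (n := 2 * r - 1) (by omega) w)) (F (perPt (n := 2 * r - 1) (by omega) w'))) ∧
    ((∀ x y : ℤ → A, dB (F x) (F y) ≤ dB x y) → False) := by

  classical
  obtain ⟨a, f, hf⟩ := hnbhd
  rcases isEmpty_or_nonempty A with hA | hA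
  · exact absurd ⟨fun g => g ⟨0, by omega⟩, fun x i => (hA.false (x 0)).elim⟩
      (hmin a 1 hr)
  have hr0 : 0 < r := by omega
  have hrL : r - 1 < r := by omega
  have hpos : 0 < 2*r-1 := by omega
  have hposZ : (0:ℤ) < ((2*r-1:ℕ):ℤ) := by omega
  have hL : ∃ b c : A, ¬ ∀ v : Fin r → A,
      f (Function.update v ⟨0, hr0⟩ b) = f (Function.update v ⟨0, hr0⟩ c) := by
    by_contra h
    push_neg at h
    exact hmin (a+1) (r-1) (by omega) (hasNbhd_left F a r hr0 f hf h)
  have hR : ∃ b c : A, ¬ ∀ v : Fin r → A,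
      f (Function.update v ⟨r-1, hrL⟩ b) = f (Function.update v ⟨r-1, hrL⟩ c) := by
    by_contra h
    push_neg at h
    exact hmin a (r-1) (by omega) (hasNbhd_right F a r hr0 f hf h)
  obtain ⟨b, c, hLbc, hRbc⟩ := exists_both
    (fun b c => ∀ v : Fin r → A,
      f (Function.update v ⟨0, hr0⟩ b) = f (Function.update v ⟨0, hr0⟩ c))
    (fun b c => ∀ v : Fin r → A,
      f (Function.update v ⟨r-1, hrL⟩ b) = f (Function.update v ⟨r-1, hrL⟩ c))
    (fun x y z hxy hyz v => (hxy v).trans (hyz v)) (fun x y h v => (h v).symm)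
    (fun x y z hxy hyz v => (hxy v).trans (hyz v)) (fun x y h v => (h v).symm)
    hL hR
  obtain ⟨v, hv⟩ := not_forall.mp hLbc
  obtain ⟨u, hu⟩ := not_forall.mp hRbc
  have hbc : b ≠ c := by rintro rfl; exact hv rfl
  -- difference characterization for the two periodic points
  have hdiff : ∀ i : ℤ, ((perPt hpos (mkWord r hr u v b)) i ≠ (perPt hpos (mkWord r hr u v c)) i) ↔ i % ((2*r-1:ℕ):ℤ) = (r:ℤ)-1 := by
    intro i
    have hmod0 := Int.emod_nonneg i (show ((2*r-1:ℕ):ℤ) ≠ 0 by omega)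
    have hmod1 := Int.emod_lt_of_pos i hposZ
    set m := (i % ((2*r-1:ℕ):ℤ)).toNat with hm
    have hmlt : m < 2*r-1 := by omega
    have h1 : (perPt hpos (mkWord r hr u v b)) i = mkWord r hr u v b ⟨m, hmlt⟩ := rfl
    have h2 : (perPt hpos (mkWord r hr u v c)) i = mkWord r hr u v c ⟨m, hmlt⟩ := rfl
    rw [h1, h2]
    simp only [mkWord, Fin.val_mk]
    split_ifs with hc1 hc2
    · exact iff_of_false (fun h => h rfl) (by omega)
    · exact iff_of_true hbc (by omega)
    · exact iff_of_false (fun h => h rfl) (by omega)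
  have hham : ∀ N : ℕ, hamIcc (perPt hpos (mkWord r hr u v b)) (perPt hpos (mkWord r hr u v c)) (-(N:ℤ)) (N:ℤ)
      = ((Finset.Icc (-(N:ℤ)) (N:ℤ)).filter (fun i => i % ((2*r-1:ℕ):ℤ) = (r:ℤ)-1)).card := by
    intro N
    exact congrArg Finset.card
      (@Finset.filter_congr _ _ _ (Classical.decPred _) _ _ (fun i _ => hdiff i))
  have hdBxy : dB (perPt hpos (mkWord r hr u v b)) (perPt hpos (mkWord r hr u v c)) = 1/((2*r-1:ℕ):ℝ) := by
    have ht := ratio_tendsto (2*r-1) (by omega)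
      (fun N : ℕ => ((Finset.Icc (-(N:ℤ)) (N:ℤ)).filter
        (fun i => i % ((2*r-1:ℕ):ℤ) = (r:ℤ)-1)).card)
      (fun N => (count_card ((2*r-1:ℕ):ℤ) ((r:ℤ)-1) hposZ (by omega) (by omega) N).1)
      (fun N => (count_card ((2*r-1:ℕ):ℤ) ((r:ℤ)-1) hposZ (by omega) (by omega) N).2)
    unfold dB
    have hfun : (fun N : ℕ => (hamIcc (perPt hpos (mkWord r hr u v b)) (perPt hpos (mkWord r hr u v c)) (-(N:ℤ)) (N:ℤ) : ℝ)/(2*(N:ℝ)+1))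
        = fun N : ℕ => ((((Finset.Icc (-(N:ℤ)) (N:ℤ)).filter
          (fun i => i % ((2*r-1:ℕ):ℤ) = (r:ℤ)-1)).card : ℝ))/(2*(N:ℝ)+1) := by
      funext N
      rw [hham N]
    rw [hfun]
    exact ht.limsup_eq
  -- windows in the image
  have hwinb1 : ∀ i : ℤ, (i + a) % ((2*r-1:ℕ):ℤ) = (r:ℤ)-1 →
      (fun j : Fin r => (perPt hpos (mkWord r hr u v b)) (i + a + (j:ℤ))) = Function.update v ⟨0, hr0⟩ b := by
    intro i hi
    funext j
    have h1 := perPt_window r hr (mkWord r hr u v b) (i+a) (r-1)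
      le_rfl (hi.trans (by omega)) j
    rw [h1]
    exact mkWord_at_right r hr u v b hr0 j (by have := j.isLt; omega)
  have hwinc1 : ∀ i : ℤ, (i + a) % ((2*r-1:ℕ):ℤ) = (r:ℤ)-1 →
      (fun j : Fin r => (perPt hpos (mkWord r hr u v c)) (i + a + (j:ℤ))) = Function.update v ⟨0, hr0⟩ c := by
    intro i hi
    funext j
    have h1 := perPt_window r hr (mkWord r hr u v c) (i+a) (r-1)
      le_rfl (hi.trans (by omega)) j
    rw [h1]
    exact mkWord_at_right r hr u v c hr0 j (by have := j.isLt; omega)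
  have hwinb0 : ∀ i : ℤ, (i + a) % ((2*r-1:ℕ):ℤ) = 0 →
      (fun j : Fin r => (perPt hpos (mkWord r hr u v b)) (i + a + (j:ℤ))) = Function.update u ⟨r-1, hrL⟩ b := by
    intro i hi
    funext j
    have h1 := perPt_window r hr (mkWord r hr u v b) (i+a) 0
      (by omega) (hi.trans (by omega)) j
    rw [h1]
    have h2 : (⟨0+(j:ℕ), by have := j.isLt; omega⟩ : Fin (2*r-1))
        = ⟨(j:ℕ), by have := j.isLt; omega⟩ := Fin.ext (show 0+(j:ℕ) = (j:ℕ) by omega)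
    rw [h2]
    exact mkWord_at_left r hr u v b hrL j (by have := j.isLt; omega)
  have hwinc0 : ∀ i : ℤ, (i + a) % ((2*r-1:ℕ):ℤ) = 0 →
      (fun j : Fin r => (perPt hpos (mkWord r hr u v c)) (i + a + (j:ℤ))) = Function.update u ⟨r-1, hrL⟩ c := by
    intro i hi
    funext j
    have h1 := perPt_window r hr (mkWord r hr u v c) (i+a) 0
      (by omega) (hi.trans (by omega)) j
    rw [h1]
    have h2 : (⟨0+(j:ℕ), by have := j.isLt; omega⟩ : Fin (2*r-1))
        = ⟨(j:ℕ), by have := j.isLt; omega⟩ := Fin.ext (show 0+(j:ℕ) = (j:ℕ) by omega)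
    rw [h2]
    exact mkWord_at_left r hr u v c hrL j (by have := j.isLt; omega)
  have himg1 : ∀ i : ℤ, (i + a) % ((2*r-1:ℕ):ℤ) = (r:ℤ)-1 → F (perPt hpos (mkWord r hr u v b)) i ≠ F (perPt hpos (mkWord r hr u v c)) i := by
    intro i hi
    rw [hf, hf, hwinb1 i hi, hwinc1 i hi]
    exact hv
  have himg0 : ∀ i : ℤ, (i + a) % ((2*r-1:ℕ):ℤ) = 0 → F (perPt hpos (mkWord r hr u v b)) i ≠ F (perPt hpos (mkWord r hr u v c)) i := by
    intro i hi
    rw [hf, hf, hwinb0 i hi, hwinc0 i hi]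
    exact hu
  -- the two residue classes
  have hk1 : ∀ i : ℤ, i % ((2*r-1:ℕ):ℤ) = ((r:ℤ)-1-a) % ((2*r-1:ℕ):ℤ) → (i+a) % ((2*r-1:ℕ):ℤ) = (r:ℤ)-1 := by
    intro i h
    have h1 : (i+a) % ((2*r-1:ℕ):ℤ) = (((r:ℤ)-1-a) % ((2*r-1:ℕ):ℤ) + a % ((2*r-1:ℕ):ℤ)) % ((2*r-1:ℕ):ℤ) := by
      rw [Int.add_emod, h]
    rw [h1, ← Int.add_emod, show (r:ℤ)-1-a+a = (r:ℤ)-1 by ring]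
    exact Int.emod_eq_of_lt (by omega) (by omega)
  have hk2 : ∀ i : ℤ, i % ((2*r-1:ℕ):ℤ) = (-a) % ((2*r-1:ℕ):ℤ) → (i+a) % ((2*r-1:ℕ):ℤ) = 0 := by
    intro i h
    have h1 : (i+a) % ((2*r-1:ℕ):ℤ) = ((-a) % ((2*r-1:ℕ):ℤ) + a % ((2*r-1:ℕ):ℤ)) % ((2*r-1:ℕ):ℤ) := by
      rw [Int.add_emod, h]
    rw [h1, ← Int.add_emod, show -a+a = (0:ℤ) by ring]
    exact Int.zero_emod _
  have hk12 : ((r:ℤ)-1-a) % ((2*r-1:ℕ):ℤ) ≠ (-a) % ((2*r-1:ℕ):ℤ) := by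
    intro h
    have h1 : ((r:ℤ)-1-a - (-a)) % ((2*r-1:ℕ):ℤ) = 0 := by
      rw [Int.sub_emod, h, sub_self, Int.zero_emod]
    rw [show (r:ℤ)-1-a - (-a) = (r:ℤ)-1 by ring,
      Int.emod_eq_of_lt (by omega) (by omega)] at h1
    omega
  have hhamF : ∀ N : ℕ,
      ((Finset.Icc (-(N:ℤ)) (N:ℤ)).filter (fun i => i % ((2*r-1:ℕ):ℤ) = ((r:ℤ)-1-a) % ((2*r-1:ℕ):ℤ))).card
      + ((Finset.Icc (-(N:ℤ)) (N:ℤ)).filter (fun i => i % ((2*r-1:ℕ):ℤ) = (-a) % ((2*r-1:ℕ):ℤ))).card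
      ≤ hamIcc (F (perPt hpos (mkWord r hr u v b))) (F (perPt hpos (mkWord r hr u v c))) (-(N:ℤ)) (N:ℤ) := by
    intro N
    have hdisj : Disjoint
        ((Finset.Icc (-(N:ℤ)) (N:ℤ)).filter (fun i => i % ((2*r-1:ℕ):ℤ) = ((r:ℤ)-1-a) % ((2*r-1:ℕ):ℤ)))
        ((Finset.Icc (-(N:ℤ)) (N:ℤ)).filter (fun i => i % ((2*r-1:ℕ):ℤ) = (-a) % ((2*r-1:ℕ):ℤ))) := by
      rw [Finset.disjoint_left]
      intro i h1 h2
      rw [Finset.mem_filter] at h1 h2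
      exact hk12 (h1.2.symm.trans h2.2)
    rw [← Finset.card_union_of_disjoint hdisj]
    unfold hamIcc
    apply Finset.card_le_card
    intro i hi
    rw [Finset.mem_union, Finset.mem_filter, Finset.mem_filter] at hi
    rcases hi with ⟨hmem, hk⟩ | ⟨hmem, hk⟩
    · exact (@Finset.mem_filter _ _ (Classical.decPred _) _ _).mpr
        ⟨hmem, himg1 i (hk1 i hk)⟩
    · exact (@Finset.mem_filter _ _ (Classical.decPred _) _ _).mpr
        ⟨hmem, himg0 i (hk2 i hk)⟩
  have hnRpos : (0:ℝ) < ((2*r-1:ℕ):ℝ) := by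
    have : (0:ℕ) < 2*r-1 := hpos
    exact_mod_cast this
  have hbound1 : ∀ N : ℕ,
      (hamIcc (F (perPt hpos (mkWord r hr u v b))) (F (perPt hpos (mkWord r hr u v c))) (-(N:ℤ)) (N:ℤ) : ℝ)/(2*(N:ℝ)+1) ≤ 1 := by
    intro N
    have hcard : hamIcc (F (perPt hpos (mkWord r hr u v b))) (F (perPt hpos (mkWord r hr u v c))) (-(N:ℤ)) (N:ℤ) ≤ 2*N+1 := by
      unfold hamIcc
      calc _ ≤ (Finset.Icc (-(N:ℤ)) (N:ℤ)).card :=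
        @Finset.card_filter_le _ _ _ (Classical.decPred _)
        _ = 2*N+1 := by rw [Int.card_Icc]; omega
    rw [div_le_one (by positivity)]
    have : (hamIcc (F (perPt hpos (mkWord r hr u v b))) (F (perPt hpos (mkWord r hr u v c))) (-(N:ℤ)) (N:ℤ) : ℝ) ≤ ((2*N+1 : ℕ) : ℝ) := by
      exact_mod_cast hcard
    calc (hamIcc (F (perPt hpos (mkWord r hr u v b))) (F (perPt hpos (mkWord r hr u v c))) (-(N:ℤ)) (N:ℤ) : ℝ) ≤ ((2*N+1 : ℕ) : ℝ) := this
      _ ≤ 2*(N:ℝ)+1 := by push_cast; linarith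
  have hFlow : ∀ N : ℕ, 2/((2*r-1:ℕ):ℝ) - 2/(2*(N:ℝ)+1)
      ≤ (hamIcc (F (perPt hpos (mkWord r hr u v b))) (F (perPt hpos (mkWord r hr u v c))) (-(N:ℤ)) (N:ℤ) : ℝ)/(2*(N:ℝ)+1) := by
    intro N
    have c1 := (count_card ((2*r-1:ℕ):ℤ) (((r:ℤ)-1-a) % ((2*r-1:ℕ):ℤ)) hposZ
      (Int.emod_nonneg _ (by omega)) (Int.emod_lt_of_pos _ hposZ) N).1
    have c2 := (count_card ((2*r-1:ℕ):ℤ) ((-a) % ((2*r-1:ℕ):ℤ)) hposZ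
      (Int.emod_nonneg _ (by omega)) (Int.emod_lt_of_pos _ hposZ) N).1
    have hsum := hhamF N
    have key : 2*(2*(N:ℝ)+1) - 2*((2*r-1:ℕ):ℝ) ≤ ((2*r-1:ℕ):ℝ) * (hamIcc (F (perPt hpos (mkWord r hr u v b))) (F (perPt hpos (mkWord r hr u v c))) (-(N:ℤ)) (N:ℤ) : ℝ) := by
      have h3 : ((2*r-1:ℕ):ℤ) * ((((Finset.Icc (-(N:ℤ)) (N:ℤ)).filter
            (fun i => i % ((2*r-1:ℕ):ℤ) = ((r:ℤ)-1-a) % ((2*r-1:ℕ):ℤ))).card 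
          + ((Finset.Icc (-(N:ℤ)) (N:ℤ)).filter
            (fun i => i % ((2*r-1:ℕ):ℤ) = (-a) % ((2*r-1:ℕ):ℤ))).card : ℕ) : ℤ)
          ≤ ((2*r-1:ℕ):ℤ) * (hamIcc (F (perPt hpos (mkWord r hr u v b))) (F (perPt hpos (mkWord r hr u v c))) (-(N:ℤ)) (N:ℤ) : ℤ) := by
        apply mul_le_mul_of_nonneg_left _ (le_of_lt hposZ)
        exact_mod_cast hsum
      have h4 : 2*(2*(N:ℤ)+1) - 2*((2*r-1:ℕ):ℤ) ≤ ((2*r-1:ℕ):ℤ) * (hamIcc (F (perPt hpos (mkWord r hr u v b))) (F (perPt hpos (mkWord r hr u v c))) (-(N:ℤ)) (N:ℤ) : ℤ) := by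
        push_cast at h3 ⊢
        nlinarith [c1, c2, h3]
      exact_mod_cast h4
    have hD : (0:ℝ) < 2*(N:ℝ)+1 := by positivity
    have e : 2/((2*r-1:ℕ):ℝ) - 2/(2*(N:ℝ)+1) = (2*(2*(N:ℝ)+1) - 2*((2*r-1:ℕ):ℝ))/(((2*r-1:ℕ):ℝ)*(2*(N:ℝ)+1)) :=
      two_div_sub _ _ (ne_of_gt hnRpos) (by positivity)
    rw [e, div_le_div_iff₀ (by positivity) hD]
    nlinarith [key, hnRpos, hD]
  have htendF : Tendsto (fun N : ℕ => 2/((2*r-1:ℕ):ℝ) - 2/(2*(N:ℝ)+1)) atTop (nhds (2/((2*r-1:ℕ):ℝ))) := by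
    have h0 : Tendsto (fun N : ℕ => 2/(2*(N:ℝ)+1)) atTop (nhds 0) := by
      have := inv_two_n_tendsto.const_mul (2:ℝ)
      simpa [mul_one_div, div_eq_mul_inv] using this
    simpa using tendsto_const_nhds.sub h0
  have hFineq : 2/((2*r-1:ℕ):ℝ) ≤ dB (F (perPt hpos (mkWord r hr u v b))) (F (perPt hpos (mkWord r hr u v c))) := by
    unfold dB
    exact le_limsup_aux (2/((2*r-1:ℕ):ℝ)) _ _ hbound1 htendF hFlow
  have huniq : ∃! j : Fin (2*r-1), mkWord r hr u v b j ≠ mkWord r hr u v c j := by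
    refine ⟨⟨r-1, by omega⟩, ?_, ?_⟩
    · simp only [mkWord, Fin.val_mk]
      split_ifs
      all_goals first | exact hbc | (exfalso; omega)
    · intro j hj
      by_contra hne
      have hjne : (j:ℕ) ≠ r-1 := fun hh => hne (Fin.ext hh)
      apply hj
      simp only [mkWord]
      split_ifs
      all_goals first | rfl | (exfalso; omega)
  have hcastR : ((2*r-1:ℕ):ℝ) = 2*(r:ℝ)-1 := by
    have h2r : (1:ℕ) ≤ 2*r := by omega
    rw [Nat.cast_sub h2r]
    push_cast
    ring
  refine ⟨⟨mkWord r hr u v b, mkWord r hr u v c, huniq, ?_, ?_⟩, ?_⟩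
  · rw [← hcastR]
    exact hdBxy
  · rw [← hcastR]
    exact hFineq
  · intro hcon
    have h1 := hcon (perPt hpos (mkWord r hr u v b)) (perPt hpos (mkWord r hr u v c))
    rw [hdBxy] at h1
    have h2 := le_trans hFineq h1
    rw [div_le_div_iff₀ hnRpos hnRpos] at h2
    nlinarith [h2, hnRpos]
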